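/- Let A and B be c.e. subsets of ℕ with B ⊂ₛ A and B ⊂ₘ A. Then for every non-computable split X ⊑ A, the set X ∖ B is not c.e. -/

import Mathlib

/-- A set of natural numbers is computably enumerable if it is the domain of a
partial computable function. -/
def CE (A : Set ℕ) : Prop := ∃ f : ℕ →. ℕ, Partrec f ∧ A = f.Dom

/-- A set of natural numbers is computable if its membership predicate is computable. -/
def IsComputableSet (A : Set ℕ) : Prop := ComputablePred (· ∈ A)

/-- `X ⊆* Y` : `X ∖ Y` is finite. -/
def SubsetStar (X Y : Set ℕ) : Prop := (X \ Y).Finite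

/-- `X ⊑ A` : `X` is a split of the c.e. set `A`, i.e. `X` is c.e. and there is a
c.e. set `Y` with `X ∩ Y = ∅` and `X ∪ Y = A`. -/
def Split (A X : Set ℕ) : Prop := CE X ∧ ∃ Y : Set ℕ, CE Y ∧ X ∩ Y = ∅ ∧ X ∪ Y = A

/-- `B ⊂ₛ A` : `B` is a small subset of `A`. -/
def SmallSubset (B A : Set ℕ) : Prop :=
  B ⊆ A ∧ ∀ U V : Set ℕ, CE U → CE V → SubsetStar (U ∩ (A \ B)) V → CE ((U \ A) ∪ V)

/-- `B ⊂ₘ A` : `B` is a major subset of `A`. -/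
def MajorSubset (B A : Set ℕ) : Prop :=
  B ⊆ A ∧ (A \ B).Infinite ∧
    ∀ W : Set ℕ, CE W → A ∪ W = Set.univ → (Set.univ \ (B ∪ W)).Finite

open Part

-- bridge CE ↔ RePred
lemma ce_iff_re {A : Set ℕ} : CE A ↔ REPred (· ∈ A) := by
  constructor
  · rintro ⟨f, hf, rfl⟩
    have h : Partrec fun n => (f n).map fun _ => () :=
      hf.map (Computable.const ()).to₂
    refine h.of_eq fun n => ?_
    apply Part.ext'
    · simp only [Part.map_Dom, Part.assert]
      simp [PFun.Dom, Part.dom_iff_mem]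
    · intro h1 h2; rfl
  · intro h
    refine ⟨fun n => (Part.assert (n ∈ A) fun _ => Part.some ()).map fun _ => 0,
      h.map (Computable.const 0).to₂, ?_⟩
    ext n
    simp [PFun.Dom, Part.assert]


lemma ce_univ : CE (Set.univ : Set ℕ) :=
  ⟨Part.some, Partrec.some, by ext n; simp [PFun.Dom]⟩

lemma CE.union {P Q : Set ℕ} (hP : CE P) (hQ : CE Q) : CE (P ∪ Q) := by
  obtain ⟨f, hf, rfl⟩ := hP
  obtain ⟨g, hg, rfl⟩ := hQ
  obtain ⟨k, hk, H⟩ := Partrec.merge' hf hg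
  exact ⟨k, hk, by ext n; simpa [PFun.Dom, Part.dom_iff_mem] using ((H n).2).symm⟩

lemma ce_inter_comp {P : Set ℕ} {q : ℕ → Prop} (hP : CE P) (hq : ComputablePred q) :
    CE {x | x ∈ P ∧ q x} := by
  obtain ⟨f, hf, rfl⟩ := hP
  have hre : Partrec fun n => Part.assert (q n) fun _ => Part.some () := hq.to_re
  refine ⟨fun n => (Part.assert (q n) fun _ => Part.some ()).bind fun _ => f n,
    hre.bind (hf.comp Computable.fst).to₂, ?_⟩
  ext n
  simp [PFun.Dom, Part.assert, Part.dom_iff_mem, and_comm]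

lemma primrec_list_mem (l : List ℕ) : Primrec fun a => decide (a ∈ l) := by
  induction l with
  | nil => simpa using Primrec.const false
  | cons b t ih =>
      have h : Primrec fun a : ℕ => (decide (a = b) || decide (a ∈ t)) :=
        Primrec₂.comp Primrec.or (Primrec.eq.comp Primrec.id (Primrec.const b)).decide ih
      exact h.of_eq fun a => by
        simp [List.mem_cons, Bool.or_eq_true, decide_eq_true_eq]

lemma compPred_finite {F : Set ℕ} (h : F.Finite) : ComputablePred (· ∈ F) := by
  classical
  refine ⟨fun _ => Classical.dec _, ?_⟩
  have hl : ∀ x, x ∈ F ↔ x ∈ h.toFinset.toList := by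
    intro x; rw [Finset.mem_toList, Set.Finite.mem_toFinset]
  have := (primrec_list_mem h.toFinset.toList).to_comp
  exact this.of_eq fun a => by
    simp only [decide_eq_decide]; exact (hl a).symm

open Nat.Partrec (Code) in
open Nat.Partrec.Code in
lemma exists_enum {D : Set ℕ} (hD : CE D) (hne : D.Nonempty) :
    ∃ g : ℕ → ℕ, Computable g ∧ Set.range g = D := by
  obtain ⟨f, hf, rfl⟩ := hD
  obtain ⟨c, hc⟩ := exists_code.1 (Partrec.nat_iff.1 hf)
  obtain ⟨d₀, hd₀⟩ := hne
  refine ⟨fun m => if (evaln m.unpair.1 c m.unpair.2).isSome then m.unpair.2 else d₀, ?_, ?_⟩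
  · have h1 : Primrec fun m : ℕ => evaln m.unpair.1 c m.unpair.2 :=
      primrec_evaln.comp (((Primrec.fst.comp Primrec.unpair).pair (Primrec.const c)).pair
        (Primrec.snd.comp Primrec.unpair))
    have h2 : PrimrecPred fun m : ℕ => (evaln m.unpair.1 c m.unpair.2).isSome = true :=
      Primrec.eq.comp (Primrec.option_isSome.comp h1) (Primrec.const true)
    exact (Primrec.ite h2 (Primrec.snd.comp Primrec.unpair) (Primrec.const d₀)).to_comp
  · ext n
    constructor
    · rintro ⟨m, rfl⟩
      by_cases hs : (evaln m.unpair.1 c m.unpair.2).isSome = true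
      · simp only [hs, if_true]
        obtain ⟨x, hx⟩ := Option.isSome_iff_exists.1 hs
        have : x ∈ Nat.Partrec.Code.eval c m.unpair.2 := evaln_sound hx
        rw [hc] at this
        exact (PFun.mem_dom f _).2 ⟨x, this⟩
      · simp only [hs, if_false]; exact hd₀
    · intro hn
      obtain ⟨x, hx⟩ := (PFun.mem_dom f n).1 hn
      have : x ∈ Nat.Partrec.Code.eval c n := by rw [hc]; exact hx
      obtain ⟨k, hk⟩ := evaln_complete.1 this
      refine ⟨Nat.pair k n, ?_⟩
      simp only [Nat.unpair_pair]
      rw [if_pos (Option.isSome_iff_exists.2 ⟨x, hk⟩)]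

lemma exists_comp_infinite_subset {D : Set ℕ} (hD : CE D) (hinf : D.Infinite) :
    ∃ R : Set ℕ, R ⊆ D ∧ R.Infinite ∧ ComputablePred (· ∈ R) := by
  obtain ⟨g, hgc, hgr⟩ := exists_enum hD hinf.nonempty
  have hub : ∀ n, ∃ k, n ≤ g k := by
    intro n
    by_contra h
    push_neg at h
    have : D ⊆ Set.Iio n := by
      rw [← hgr]; rintro _ ⟨k, rfl⟩; exact h k
    exact hinf ((Set.finite_Iio n).subset this)
  set K : ℕ → ℕ := fun n => Nat.find (hub n) with hK
  set h' : ℕ → ℕ := fun n => g (K n) with hh'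
  have hspec : ∀ n, n ≤ g (K n) := fun n => Nat.find_spec (hub n)
  have hcomp : Computable h' := by
    have hp : Computable₂ fun (n k : ℕ) => decide (n ≤ g k) :=
      (Primrec.nat_le.decide.to_comp).comp Computable.fst (hgc.comp Computable.snd)
    have h1 : Partrec fun n => Nat.rfind fun k => (Part.some (decide (n ≤ g k)) : Part Bool) :=
      Partrec.rfind hp.partrec₂
    have h2 : Partrec fun n =>
        (Nat.rfind fun k => (Part.some (decide (n ≤ g k)) : Part Bool)).map g :=
      h1.map (hgc.comp Computable.snd).to₂
    refine h2.of_eq_tot fun n => ?_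
    refine Part.mem_map g ?_
    apply Nat.mem_rfind.2
    constructor
    · simpa using hspec n
    · intro m hm
      simpa using Nat.find_min (hub n) hm
  have hfix : ∀ N, h' (h' N) = h' N := by
    intro N
    have le1 : K (g (K N)) ≤ K N := Nat.find_min' (hub (g (K N))) (le_refl _)
    have le2 : K N ≤ K (g (K N)) := by
      by_contra hlt
      push_neg at hlt
      have h3 := Nat.find_min (hub N) hlt
      exact h3 (le_trans (hspec N) (hspec (g (K N))))
    simp only [hh']
    rw [le_antisymm le1 le2]
  refine ⟨{n | h' n = n}, ?_, ?_, ?_⟩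
  · intro n hn
    rw [← hgr]
    exact ⟨K n, hn⟩
  · apply Set.infinite_of_not_bddAbove
    rw [not_bddAbove_iff]
    intro x
    refine ⟨h' (x + 1), hfix (x + 1), ?_⟩
    exact lt_of_lt_of_le (Nat.lt_succ_self x) (hspec (x + 1))
  · classical
    refine ⟨fun _ => Classical.dec _, ?_⟩
    have : Computable fun n => decide (h' n = n) :=
      (Primrec.eq.decide.to_comp).comp hcomp Computable.id
    exact this.of_eq fun n => by simp [decide_eq_decide]

/-- If `A`, `B` are c.e. with `B ⊂ₛ A` and `B ⊂ₘ A`, then for every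
non-computable split `X ⊑ A`, the set `X ∖ B` is not c.e. -/
theorem stmt7 (A B : Set ℕ) (hA : CE A) (hB : CE B)
    (hsmall : SmallSubset B A) (hmajor : MajorSubset B A) :
    ∀ X : Set ℕ, Split A X → ¬ IsComputableSet X → ¬ CE (X \ B) := by
  rintro X ⟨hXce, Y, hYce, hXYdisj, hXYun⟩ hXnc hDce
  have hXsubA : X ⊆ A := by rw [← hXYun]; exact Set.subset_union_left
  by_cases hDfin : (X \ B).Finite
  · -- finite case : X is computable, contradiction
    have hcond : SubsetStar (Set.univ ∩ (A \ B)) (Y ∪ (X \ B)) := by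
      have hempty : (Set.univ ∩ (A \ B)) \ (Y ∪ (X \ B)) = ∅ := by
        rw [Set.eq_empty_iff_forall_notMem]
        rintro a ⟨⟨-, haA, haB⟩, hnot⟩
        rw [← hXYun] at haA
        rcases haA with haX | haY
        · exact hnot (Or.inr ⟨haX, haB⟩)
        · exact hnot (Or.inl haY)
      unfold SubsetStar
      rw [hempty]
      exact Set.finite_empty
    have hS : CE ((Set.univ \ A) ∪ (Y ∪ (X \ B))) :=
      hsmall.2 _ _ ce_univ (hYce.union hDce) hcond
    have hDc : ComputablePred fun x => ¬ x ∈ (X \ B) := (compPred_finite hDfin).not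
    have hXcc : CE {x | x ∈ ((Set.univ \ A) ∪ (Y ∪ (X \ B))) ∧ ¬ x ∈ (X \ B)} :=
      ce_inter_comp hS hDc
    have heq : {x | x ∈ ((Set.univ \ A) ∪ (Y ∪ (X \ B))) ∧ ¬ x ∈ (X \ B)} = {x | ¬ x ∈ X} := by
      ext a
      simp only [Set.mem_setOf_eq, Set.mem_union, Set.mem_diff, Set.mem_univ, true_and]
      constructor
      · rintro ⟨hmem, hnD⟩ haX
        rcases hmem with hnA | hY | hD
        · exact hnA (hXsubA haX)
        · have : a ∈ X ∩ Y := ⟨haX, hY⟩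
          rw [hXYdisj] at this
          exact this
        · exact hnD hD
      · intro haX
        refine ⟨?_, fun hD => haX hD.1⟩
        by_cases haA : a ∈ A
        · rw [← hXYun] at haA
          rcases haA with h | h
          · exact absurd h haX
          · exact Or.inr (Or.inl h)
        · exact Or.inl haA
    rw [heq] at hXcc
    apply hXnc
    unfold IsComputableSet
    rw [ComputablePred.computable_iff_re_compl_re']
    refine ⟨ce_iff_re.1 hXce, ?_⟩
    exact (ce_iff_re.1 hXcc).of_eq fun a => Iff.rfl
  · -- infinite case : contradicts majorness via an infinite computable subset
    obtain ⟨R, hRsub, hRinf, hRcomp⟩ := exists_comp_infinite_subset hDce hDfin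
    have hWce : CE {x | ¬ x ∈ R} :=
      ce_iff_re.2 (((hRcomp.not).to_re).of_eq fun a => Iff.rfl)
    have hcover : A ∪ {x | ¬ x ∈ R} = Set.univ := by
      ext x
      simp only [Set.mem_union, Set.mem_setOf_eq, Set.mem_univ, iff_true]
      by_cases hx : x ∈ R
      · exact Or.inl (hXsubA (hRsub hx).1)
      · exact Or.inr hx
    have hfin := hmajor.2.2 _ hWce hcover
    have hsub2 : R ⊆ Set.univ \ (B ∪ {x | ¬ x ∈ R}) := by
      intro r hr
      refine ⟨trivial, ?_⟩
      rintro (hrB | hrW)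
      · exact (hRsub hr).2 hrB
      · exact hrW hr
    exact (hRinf.mono hsub2) hfin
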